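/- Let M and N be topological spaces, b ∈ M, r ∈ N, f : M → N a function, and φ : M × M × N → M × M × N a continuous map that is homotopic to the identity map of M × M × N and satisfies φ(x, b, r) = (x, x, f x) for all x ∈ M. Then for every k ≥ 1 and every continuous map g : S^k → M from the unit sphere S^k ⊆ ℝ^{k+1}, the map g is homotopic to a constant map. -/

import Mathlib

/-- Under the cloning hypotheses, every continuous map from a sphere `S^k` (`k ≥ 1`) into
`M` is nullhomotopic. -/
theorem no_cloning_spheres_nullhomotopic
    {M N : Type*} [TopologicalSpace M] [TopologicalSpace N]
    (b : M) (r : N) (f : M → N)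
    (φ : C(M × M × N, M × M × N))
    (hφ : φ.Homotopic (ContinuousMap.id (M × M × N)))
    (hclone : ∀ x : M, φ (x, b, r) = (x, x, f x)) :
    ∀ (k : ℕ), 1 ≤ k →
      ∀ g : C(Metric.sphere (0 : EuclideanSpace ℝ (Fin (k + 1))) 1, M),
        ∃ y : M, g.Homotopic (ContinuousMap.const _ y) := by
  intro k hk g
  refine ⟨b, ?_⟩
  let G : C(Metric.sphere (0 : EuclideanSpace ℝ (Fin (k + 1))) 1, M × M × N) :=
    ⟨fun x => (g x, b, r), g.continuous.prodMk continuous_const⟩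
  let P : C(M × M × N, M) := ⟨fun p => p.2.1, continuous_snd.fst⟩
  have h1 : (φ.comp G).Homotopic ((ContinuousMap.id _).comp G) :=
    hφ.comp (ContinuousMap.Homotopic.refl G)
  have h2 : (P.comp (φ.comp G)).Homotopic (P.comp ((ContinuousMap.id _).comp G)) :=
    (ContinuousMap.Homotopic.refl P).comp h1
  have e1 : P.comp (φ.comp G) = g := by
    ext x
    simp [P, G, hclone]
  have e2 : P.comp ((ContinuousMap.id _).comp G) = ContinuousMap.const _ b := by
    ext x
    simp [P, G]
  rwa [e1, e2] at h2
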